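/- Let (D, M) be a local domain, not a field, such that (M : M) = {x in the quotient field of D : xM ⊆ M} is a discrete valuation ring with maximal ideal M. Then D is a TAF-domain: every proper nonzero ideal of D is a finite product of 2-absorbing ideals. -/

import Mathlib

set_option maxHeartbeats 1000000


/-- An ideal is 2-absorbing if whenever a product of three elements lies in it,
the product of some two of them lies in it. -/
def IsTwoAbsorbing {R : Type*} [CommRing R] (I : Ideal R) : Prop :=
  ∀ a b c : R, a * b * c ∈ I → a * b ∈ I ∨ a * c ∈ I ∨ b * c ∈ I

/-- A TAF-ring: every proper ideal is a finite product of proper 2-absorbing ideals. -/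
def IsTAFRing (R : Type*) [CommRing R] : Prop :=
  ∀ I : Ideal R, I ≠ ⊤ → ∃ (n : ℕ) (J : Fin n → Ideal R),
    (∀ i, J i ≠ ⊤ ∧ IsTwoAbsorbing (J i)) ∧ I = ∏ i, J i

/-- If the square of the maximal ideal of a local ring is contained in `I`,
then `I` is 2-absorbing. -/
lemma isTwoAbsorbing_of_sq_le {R : Type*} [CommRing R] [IsLocalRing R] (I : Ideal R)
    (h : ∀ a ∈ IsLocalRing.maximalIdeal R, ∀ b ∈ IsLocalRing.maximalIdeal R, a * b ∈ I) :
    IsTwoAbsorbing I := by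
  intro a b c habc
  by_cases ha : IsUnit a
  · obtain ⟨u, hu⟩ := ha
    right; right
    have : b * c = ↑u⁻¹ * (a * b * c) := by
      rw [← hu]
      calc b * c = (↑u⁻¹ * ↑u) * (b * c) := by rw [u.inv_mul, one_mul]
        _ = ↑u⁻¹ * (↑u * b * c) := by ring
    rw [this]
    exact I.mul_mem_left _ habc
  · by_cases hb : IsUnit b
    · obtain ⟨u, hu⟩ := hb
      right; left
      have : a * c = ↑u⁻¹ * (a * b * c) := by
        rw [← hu]
        calc a * c = (↑u⁻¹ * ↑u) * (a * c) := by rw [u.inv_mul, one_mul]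
          _ = ↑u⁻¹ * (a * ↑u * c) := by ring
      rw [this]
      exact I.mul_mem_left _ habc
    · left
      exact h a ((IsLocalRing.mem_maximalIdeal a).mpr ha) b
        ((IsLocalRing.mem_maximalIdeal b).mpr hb)

theorem TAF_of_MM_DVR {D : Type*} [CommRing D] [IsDomain D] [IsLocalRing D]
    (hnf : ¬ IsField D) (B : Subring (FractionRing D))
    (hB : ∀ x : FractionRing D, x ∈ B ↔ ∀ m ∈ IsLocalRing.maximalIdeal D,
      ∃ m' ∈ IsLocalRing.maximalIdeal D,
        x * algebraMap D (FractionRing D) m = algebraMap D (FractionRing D) m')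
    (hDVR : IsDiscreteValuationRing B)
    (hmax : ∀ x : B, ¬ IsUnit x ↔ ∃ m ∈ IsLocalRing.maximalIdeal D,
      (x : FractionRing D) = algebraMap D (FractionRing D) m) :
    ∀ I : Ideal D, I ≠ ⊥ → I ≠ ⊤ →
      ∃ (n : ℕ) (J : Fin n → Ideal D),
        (∀ i, J i ≠ ⊤ ∧ IsTwoAbsorbing (J i)) ∧ I = ∏ i, J i := by
  intro I hI0 hIT
  set K := FractionRing D with hK
  set f : D →+* K := algebraMap D K with hf
  set M := IsLocalRing.maximalIdeal D with hM
  -- image of D lands in B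
  have hfD : ∀ d : D, f d ∈ B := by
    intro d
    rw [hB]
    intro a ha
    exact ⟨d * a, M.mul_mem_left d ha, by rw [map_mul]⟩
  set g : D →+* B := f.codRestrict B hfD with hg
  have hgval : ∀ d : D, (g d : K) = f d := fun d => rfl
  have hfinj : Function.Injective f := IsFractionRing.injective D K
  have hginj : Function.Injective g := by
    intro x y hxy
    apply hfinj
    rw [← hgval, ← hgval, hxy]
  -- key translations of hmax
  have hF1 : ∀ a : D, a ∈ M → ¬ IsUnit (g a) := by
    intro a ha
    exact (hmax (g a)).mpr ⟨a, ha, rfl⟩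
  have hF2 : ∀ b : B, ¬ IsUnit b → ∃ a ∈ M, g a = b := by
    intro b hb
    obtain ⟨a, ha, hab⟩ := (hmax b).mp hb
    exact ⟨a, ha, by ext; exact hab.symm⟩
  -- uniformizer
  obtain ⟨ϖ, hϖ⟩ := IsDiscreteValuationRing.exists_irreducible B
  obtain ⟨m, hmM, hgm⟩ := hF2 ϖ hϖ.not_isUnit
  have hϖ0 : ϖ ≠ 0 := hϖ.ne_zero
  -- divisibility by ϖ for nonunits
  have hF3 : ∀ b : B, ¬ IsUnit b → ϖ ∣ b := by
    intro b hb
    have hmem : b ∈ IsLocalRing.maximalIdeal B := (IsLocalRing.mem_maximalIdeal b).mpr hb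
    rw [(IsDiscreteValuationRing.irreducible_iff_uniformizer ϖ).mp hϖ] at hmem
    exact Ideal.mem_span_singleton.mp hmem
  have hF4 : ∀ b : B, ϖ ∣ b → ¬ IsUnit b := by
    intro b hd hu
    exact hϖ.not_isUnit (isUnit_of_dvd_unit hd hu)
  -- minimal valuation on I
  set S : Set ℕ := {n : ℕ | ∃ d ∈ I, d ≠ 0 ∧ ∃ u : Bˣ, g d = ↑u * ϖ ^ n} with hS
  have hSne : S.Nonempty := by
    obtain ⟨d, hdI, hd0⟩ := Submodule.exists_mem_ne_zero_of_ne_bot hI0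
    have hgd0 : g d ≠ 0 := fun h => hd0 (hginj (h.trans (map_zero g).symm))
    obtain ⟨n, u, hn⟩ := IsDiscreteValuationRing.eq_unit_mul_pow_irreducible hgd0 hϖ
    exact ⟨n, d, hdI, hd0, u, hn⟩
  set N := sInf S with hN
  obtain ⟨i₀, hi₀I, hi₀0, u₀, hu₀⟩ : N ∈ S := Nat.sInf_mem hSne
  have hIM : I ≤ M := IsLocalRing.le_maximalIdeal hIT
  have hdvdI : ∀ d ∈ I, ϖ ^ N ∣ g d := by
    intro d hd
    by_cases hd0 : d = 0
    · rw [hd0, map_zero]; exact dvd_zero _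
    · have hgd0 : g d ≠ 0 := fun h => hd0 (hginj (h.trans (map_zero g).symm))
      obtain ⟨n, u, hn⟩ := IsDiscreteValuationRing.eq_unit_mul_pow_irreducible hgd0 hϖ
      have hnS : n ∈ S := ⟨d, hd, hd0, u, hn⟩
      exact dvd_trans (pow_dvd_pow ϖ (Nat.sInf_le hnS)) ⟨↑u, by rw [hn, mul_comm]⟩
  -- N ≥ 1
  have hN0 : N ≠ 0 := by
    intro h0
    apply hF1 i₀ (hIM hi₀I)
    rw [hu₀, h0, pow_zero, mul_one]
    exact u₀.isUnit
  obtain ⟨k, hk⟩ : ∃ k, N = k + 1 := ⟨N - 1, (Nat.succ_pred_eq_of_ne_zero hN0).symm⟩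
  -- the ideal J
  set J : Ideal D :=
    { carrier := {a : D | m ^ k * a ∈ I}
      add_mem' := fun {x y} hx hy => by
        simpa [mul_add] using I.add_mem hx hy
      zero_mem' := by simp
      smul_mem' := fun c x hx => by
        simp only [Set.mem_setOf_eq, smul_eq_mul] at *
        rw [mul_comm c x, ← mul_assoc]
        exact I.mul_mem_right c hx } with hJ
  have hJmem : ∀ a : D, a ∈ J ↔ m ^ k * a ∈ I := fun a => Iff.rfl
  -- J ≤ M
  have hJM : J ≤ M := by
    intro a haJ
    rw [hJmem] at haJ
    have h1 : ϖ ^ (k + 1) ∣ ϖ ^ k * g a := by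
      have := hdvdI _ haJ
      rwa [map_mul, map_pow, hgm, hk] at this
    have h2 : ϖ ∣ g a := by
      rcases h1 with ⟨c, hc⟩
      refine ⟨c, mul_left_cancel₀ (pow_ne_zero k hϖ0) ?_⟩
      rw [hc]; ring
    obtain ⟨a', ha'M, ha'⟩ := hF2 (g a) (hF4 _ h2)
    rwa [← hginj ha']
  -- I = span{m^k} * J
  have hIeq : I = Ideal.span {m ^ k} * J := by
    apply le_antisymm
    · intro i hiI
      rw [Ideal.mem_span_singleton_mul]
      have hdvd' := hdvdI i hiI
      rw [hk] at hdvd'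
      obtain ⟨c, hc⟩ := hdvd'
      obtain ⟨j, hjM, hj⟩ := hF2 (ϖ * c) (hF4 _ (Dvd.intro c rfl))
      have hij : m ^ k * j = i := by
        apply hginj
        rw [map_mul, map_pow, hgm, hj, hc, pow_succ]
        ring
      exact ⟨j, (hJmem j).mpr (hij ▸ hiI), hij⟩
    · rw [Ideal.mul_le]
      intro r hr j hjJ
      obtain ⟨d, hd⟩ := Ideal.mem_span_singleton.mp hr
      have : r * j = d * (m ^ k * j) := by rw [hd]; ring
      rw [this]
      exact I.mul_mem_left d ((hJmem j).mp hjJ)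
  -- squares of M land in the factors
  have hsq_span : ∀ a ∈ M, ∀ b ∈ M, a * b ∈ Ideal.span ({m} : Set D) := by
    intro a ha b hb
    obtain ⟨c, hc⟩ := hF3 (g a) (hF1 a ha)
    have hnu : ¬ IsUnit (c * g b) := by
      intro hu
      exact hF1 b hb (isUnit_of_mul_isUnit_right hu)
    obtain ⟨m', hm'M, hm'⟩ := hF2 _ hnu
    rw [Ideal.mem_span_singleton]
    exact ⟨m', hginj (by rw [map_mul, map_mul, hgm, hm', hc]; ring)⟩
  have hsq_J : ∀ a ∈ M, ∀ b ∈ M, a * b ∈ J := by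
    intro a ha b hb
    rw [hJmem]
    obtain ⟨c, hc⟩ := hF3 (g a) (hF1 a ha)
    obtain ⟨c', hc'⟩ := hF3 (g b) (hF1 b hb)
    have hnu : ¬ IsUnit ((↑u₀⁻¹ * ϖ) * (c * c')) := by
      intro hu
      have := isUnit_of_mul_isUnit_left hu
      exact hϖ.not_isUnit (isUnit_of_mul_isUnit_right this)
    obtain ⟨m'', hm''M, hm''⟩ := hF2 _ hnu
    have heq : m ^ k * (a * b) = i₀ * m'' := by
      apply hginj
      simp only [map_mul, map_pow]
      rw [hgm, hc, hc', hu₀, hm'', hk]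
      have huu : (↑u₀ : B) * ↑u₀⁻¹ = 1 := u₀.mul_inv
      calc ϖ ^ k * (ϖ * c * (ϖ * c')) = ϖ ^ (k + 1) * (ϖ * (c * c')) := by ring
        _ = (↑u₀ * ↑u₀⁻¹) * (ϖ ^ (k + 1) * (ϖ * (c * c'))) := by rw [huu, one_mul]
        _ = ↑u₀ * ϖ ^ (k + 1) * (↑u₀⁻¹ * ϖ * (c * c')) := by ring
    rw [heq]
    exact I.mul_mem_right m'' hi₀I
  -- assemble
  refine ⟨k + 1, Fin.cons J (fun _ => Ideal.span {m}), ?_, ?_⟩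
  · intro i
    refine Fin.cases ?_ ?_ i
    · refine ⟨?_, isTwoAbsorbing_of_sq_le J hsq_J⟩
      intro hJT
      exact (IsLocalRing.maximalIdeal.isMaximal D).ne_top (top_le_iff.mp (hJT ▸ hJM))
    · intro j
      simp only [Fin.cons_succ]
      refine ⟨?_, isTwoAbsorbing_of_sq_le _ hsq_span⟩
      rw [Ne, Ideal.span_singleton_eq_top]
      exact fun h => hF1 m hmM (h.map g)
  · rw [Fin.prod_cons, Finset.prod_const, Finset.card_univ, Fintype.card_fin,
      Ideal.span_singleton_pow, mul_comm]
    exact hIeq
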